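/- Let G be a finite simple undirected graph. If G has an orientation D which contains no odd directed (simple) cycle and in which the maximum outdegree is d, then G is (k(d+1):k)-choosable for every positive integer k. -/

import Mathlib

/-- A graph `G` is `(a:b)`-choosable if for every assignment of color sets of size `a`
to the vertices, one can choose subsets of size `b` that are disjoint on adjacent vertices. -/
def SimpleGraph.Choosable {V : Type*} (G : SimpleGraph V) (a b : ℕ) : Prop :=
  ∀ S : V → Finset ℕ, (∀ v, (S v).card = a) →
    ∃ C : V → Finset ℕ, (∀ v, C v ⊆ S v) ∧ (∀ v, (C v).card = b) ∧
      ∀ u v, G.Adj u v → Disjoint (C u) (C v)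

/-- The `k`-th choice number of `G`: the least `n` such that `G` is `(n:k)`-choosable. -/
noncomputable def SimpleGraph.chooseNum {V : Type*} (G : SimpleGraph V) (k : ℕ) : ℕ :=
  sInf {n | G.Choosable n k}

/-- A directed graph (given by its edge relation `E`) has an odd directed simple cycle
if there are distinct vertices `v, l₀, …, l_{n-1}` with edges
`v → l₀ → ⋯ → l_{n-1} → v`, the length `n + 1` being odd. -/
def HasOddDirectedCycle {V : Type*} (E : V → V → Prop) : Prop :=
  ∃ (v : V) (l : List V), (v :: l).Nodup ∧ Odd (l.length + 1) ∧ List.Chain E v (l ++ [v])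

open Relation

theorem List.chain_split {α : Type*} {R : α → α → Prop} {a b : α} {l₁ l₂ : List α} :
    List.Chain R a (l₁ ++ b :: l₂) ↔ List.Chain R a (l₁ ++ [b]) ∧ List.Chain R b l₂ :=
  List.isChain_cons_split

theorem List.chain_singleton {α : Type*} {R : α → α → Prop} {a b : α} :
    List.Chain R a [b] ↔ R a b :=
  List.isChain_pair



section Aux
variable {V : Type*}

lemma exists_dup_decomp : ∀ {L : List V}, ¬ L.Nodup → ∃ x l₁ l₂, L = l₁ ++ x :: l₂ ∧ x ∈ l₂ := by
  intro L
  induction L with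
  | nil => simp
  | cons a t ih =>
    intro h
    rw [List.nodup_cons] at h
    push_neg at h
    by_cases ha : a ∈ t
    · exact ⟨a, [], t, by simp, ha⟩
    · obtain ⟨x, l₁, l₂, rfl, hx⟩ := ih (h ha)
      exact ⟨x, a :: l₁, l₂, by simp, hx⟩

lemma chain_rotate {E : V → V → Prop} {v x : V} {l₁ l₂ : List V}
    (h : List.Chain E v (l₁ ++ x :: (l₂ ++ [v]))) :
    List.Chain E x ((l₂ ++ v :: l₁) ++ [x]) := by
  rw [List.chain_split] at h
  have heq : (l₂ ++ v :: l₁) ++ [x] = l₂ ++ v :: (l₁ ++ [x]) := by simp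
  rw [heq, List.chain_split]
  exact ⟨h.2, h.1⟩

lemma odd_cycle_of_closed_walk {E : V → V → Prop} :
    ∀ n, ∀ v (l : List V), l.length + 1 = n → List.Chain E v (l ++ [v]) → Odd n →
      HasOddDirectedCycle E := by
  intro n
  induction n using Nat.strong_induction_on with
  | _ n ih =>
  intro v l hlen hchain hoddn
  by_cases hnd : (v :: l).Nodup
  · exact ⟨v, l, hnd, hlen ▸ hoddn, hchain⟩
  · have key : ∀ w (m : List V), w ∈ m → m.length + 1 = n →
        List.Chain E w (m ++ [w]) → HasOddDirectedCycle E := by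
      intro w m hw hmlen hmchain
      obtain ⟨a₁, a₂, rfl⟩ := List.append_of_mem hw
      have h1 : List.Chain E w (a₁ ++ w :: (a₂ ++ [w])) := by
        simpa using hmchain
      rw [List.chain_split] at h1
      have hsum : (a₁.length + 1) + (a₂.length + 1) = n := by
        simp at hmlen; omega
      have hone : Odd (a₁.length + 1) ∨ Odd (a₂.length + 1) := by
        rw [Nat.odd_iff] at hoddn ⊢
        rw [Nat.odd_iff]
        omega
      rcases hone with ho | ho
      · exact ih (a₁.length + 1) (by omega) w a₁ rfl h1.1 ho
      · exact ih (a₂.length + 1) (by omega) w a₂ rfl h1.2 ho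
    rw [List.nodup_cons] at hnd
    push_neg at hnd
    by_cases hv : v ∈ l
    · exact key v l hv hlen hchain
    · obtain ⟨x, l₁, l₂, rfl, hx⟩ := exists_dup_decomp (hnd hv)
      have h1 : List.Chain E v (l₁ ++ x :: (l₂ ++ [v])) := by simpa using hchain
      have h2 := chain_rotate h1
      refine key x (l₂ ++ v :: l₁) (by simp [hx]) ?_ h2
      simp at hlen ⊢
      omega

end Aux


section Aux
variable {V : Type*}

def PStep (E : V → V → Prop) : V × Bool → V × Bool → Prop :=
  fun p q => E p.1 q.1 ∧ q.2 = !p.2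

lemma preach_walk {E : V → V → Prop} {p q : V × Bool}
    (h : ReflTransGen (PStep E) p q) :
    p = q ∨ ∃ l : List V, List.Chain E p.1 (l ++ [q.1]) ∧
      ((l.length + 1) % 2 = if p.2 = q.2 then 0 else 1) := by
  induction h with
  | refl => left; rfl
  | @tail b c hab hbc ih =>
    right
    rcases ih with rfl | ⟨l, hl, hpar⟩
    · refine ⟨[], by simpa [List.chain_singleton] using hbc.1, ?_⟩
      have h2 : c.2 = !p.2 := hbc.2
      simp [h2]
    · refine ⟨l ++ [b.1], ?_, ?_⟩
      · have heq : (l ++ [b.1]) ++ [c.1] = l ++ b.1 :: [c.1] := by simp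
        rw [heq, List.chain_split]
        exact ⟨hl, List.chain_singleton.2 hbc.1⟩
      · have h2 : c.2 = !b.2 := hbc.2
        simp only [List.length_append, List.length_singleton]
        rcases hp2 : p.2 <;> rcases hb2 : b.2 <;> simp [hp2, hb2, h2] at hpar ⊢ <;> omega

lemma no_odd_parity_loop {E E' : V → V → Prop} (hodd : ¬ HasOddDirectedCycle E)
    (hsub : ∀ x y, E' x y → E x y) (v : V) :
    ¬ ReflTransGen (PStep E') (v, false) (v, true) := by
  intro h
  rcases preach_walk h with heq | ⟨l, hl, hpar⟩
  · simp at heq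
  · simp at hpar
    have hl' : List.Chain E v (l ++ [v]) := List.Chain.imp (fun a b hab => hsub a b hab) hl
    exact hodd (odd_cycle_of_closed_walk (l.length + 1) v l rfl hl' (Nat.odd_iff.2 hpar))

lemma lift_reach {E : V → V → Prop} {a c : V} (h : ReflTransGen E a c) :
    ∃ p : Bool, ∀ b : Bool, ReflTransGen (PStep E) (a, b) (c, xor b p) := by
  induction h with
  | refl => exact ⟨false, fun b => by simpa using ReflTransGen.refl⟩
  | @tail b' c' hab hbc ih =>
    obtain ⟨p, hp⟩ := ih
    refine ⟨!p, fun b => (hp b).tail ⟨hbc, ?_⟩⟩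
    cases b <;> cases p <;> rfl

end Aux

section Ker
variable {V : Type*} [Fintype V]

lemma exists_quasi_max (ρ : V → V → Prop)
    (hrefl : ∀ x, ρ x x) (htrans : ∀ {x y z}, ρ x y → ρ y z → ρ x z)
    (A : Finset V) (hA : A.Nonempty) : ∃ v ∈ A, ∀ w ∈ A, ρ v w → ρ w v := by
  classical
  obtain ⟨v₀, hv₀⟩ := hA
  suffices h : ∀ n (v : V), v ∈ A → (A.filter (fun w => ρ v w)).card ≤ n →
      ∃ v ∈ A, ∀ w ∈ A, ρ v w → ρ w v from
    h (A.filter (fun w => ρ v₀ w)).card v₀ hv₀ le_rfl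
  intro n
  induction n with
  | zero =>
    intro v hv hc
    exfalso
    have hm : v ∈ A.filter (fun w => ρ v w) := Finset.mem_filter.2 ⟨hv, hrefl v⟩
    have := Finset.card_pos.2 ⟨v, hm⟩
    omega
  | succ n ihn =>
    intro v hv hc
    by_cases hmax : ∀ w ∈ A, ρ v w → ρ w v
    · exact ⟨v, hv, hmax⟩
    · push_neg at hmax
      obtain ⟨w, hwA, hvw, hnwv⟩ := hmax
      apply ihn w hwA
      have hsub : A.filter (fun u => ρ w u) ⊆ A.filter (fun u => ρ v u) := by
        intro u hu
        rw [Finset.mem_filter] at hu ⊢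
        exact ⟨hu.1, htrans hvw hu.2⟩
      have hss : A.filter (fun u => ρ w u) ⊂ A.filter (fun u => ρ v u) := by
        rw [Finset.ssubset_iff_of_subset hsub]
        refine ⟨v, Finset.mem_filter.2 ⟨hv, hrefl v⟩, ?_⟩
        simp only [Finset.mem_filter]
        exact fun h => hnwv h.2
      have := Finset.card_lt_card hss
      omega

lemma exists_kernel (E : V → V → Prop)
    (hodd : ¬ HasOddDirectedCycle E) (A : Finset V) :
    ∃ K : Finset V, K ⊆ A ∧ (∀ x ∈ K, ∀ y ∈ K, ¬ E x y) ∧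
      ∀ v ∈ A, v ∉ K → ∃ u ∈ K, E v u := by
  classical
  induction A using Finset.strongInduction with
  | _ A ih =>
  rcases A.eq_empty_or_nonempty with rfl | hA
  · exact ⟨∅, by simp⟩
  set EA : V → V → Prop := fun x y => x ∈ A ∧ y ∈ A ∧ E x y with hEAdef
  obtain ⟨v, hvA, hvmax⟩ := exists_quasi_max (ReflTransGen EA) (fun x => ReflTransGen.refl)
    (fun h1 h2 => h1.trans h2) A hA
  set ρ : V → V → Prop := ReflTransGen EA with hρdef
  -- the terminal strong component
  set C : Finset V := A.filter (fun w => ρ v w) with hCdef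
  have hCA : C ⊆ A := Finset.filter_subset _ _
  have hterm : ∀ x ∈ C, ∀ y, E x y → y ∈ A → y ∈ C := by
    intro x hx y hxy hyA
    rw [hCdef, Finset.mem_filter] at hx ⊢
    exact ⟨hyA, hx.2.tail ⟨hx.1, hyA, hxy⟩⟩
  -- parity reachability
  set PR : V → Bool → Prop := fun w b => ReflTransGen (PStep EA) (v, false) (w, b) with hPRdef
  have hnoloop : ¬ ReflTransGen (PStep EA) (v, false) (v, true) :=
    no_odd_parity_loop hodd (fun x y h => h.2.2) v
  have hparity : ∀ w ∈ C, ¬ (PR w false ∧ PR w true) := by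
    rintro w hw ⟨h0, h1⟩
    have hρvw : ρ v w := (Finset.mem_filter.1 hw).2
    have hρwv : ρ w v := hvmax w (hCA hw) hρvw
    obtain ⟨p, hp⟩ := lift_reach hρwv
    rcases hpv : p with _ | _
    · exact hnoloop ((h1.trans (by simpa [hpv] using hp true)))
    · exact hnoloop ((h0.trans (by simpa [hpv] using hp false)))
  have hexb : ∀ w ∈ C, PR w false ∨ PR w true := by
    intro w hw
    have hρvw : ρ v w := (Finset.mem_filter.1 hw).2
    obtain ⟨p, hp⟩ := lift_reach hρvw
    rcases hpv : p with _ | _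
    · left; simpa [hpv] using hp false
    · right; simpa [hpv] using hp false
  set KC : Finset V := C.filter (fun w => PR w false) with hKCdef
  have hvKC : v ∈ KC := by
    rw [hKCdef, Finset.mem_filter, hCdef, Finset.mem_filter]
    exact ⟨⟨hvA, ReflTransGen.refl⟩, ReflTransGen.refl⟩
  have hKC_C : KC ⊆ C := Finset.filter_subset _ _
  have hKCind : ∀ x ∈ KC, ∀ y ∈ KC, ¬ E x y := by
    intro x hx y hy hxy
    have hx' := Finset.mem_filter.1 hx
    have hy' := Finset.mem_filter.1 hy
    have hEAxy : EA x y := ⟨hCA (hKC_C hx), hCA (hKC_C hy), hxy⟩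
    have : PR y true := hx'.2.tail ⟨hEAxy, rfl⟩
    exact hparity y hy'.1 ⟨hy'.2, this⟩
  have hKCdom : ∀ w ∈ C, w ∉ KC → ∃ u ∈ KC, E w u := by
    intro w hw hwK
    have hw1 : PR w true := by
      rcases hexb w hw with h | h
      · exact absurd (Finset.mem_filter.2 ⟨hw, h⟩) hwK
      · exact h
    have hρwv : ρ w v := hvmax w (hCA hw) (Finset.mem_filter.1 hw).2
    rcases hρwv.cases_head with rfl | ⟨y, hwy, _⟩
    · exact absurd hvKC hwK
    · have hyC : y ∈ C := hterm w hw y hwy.2.2 hwy.2.1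
      have hyPR : PR y false := hw1.tail ⟨hwy, by simp⟩
      exact ⟨y, Finset.mem_filter.2 ⟨hyC, hyPR⟩, hwy.2.2⟩
  -- remove KC and its in-neighbours, recurse
  set Nbr : Finset V := A.filter (fun w => ∃ u ∈ KC, E w u) with hNdef
  set A' : Finset V := A \ (KC ∪ Nbr) with hA'def
  have hA'ss : A' ⊂ A := by
    rw [Finset.ssubset_iff_of_subset (Finset.sdiff_subset)]
    refine ⟨v, hvA, ?_⟩
    simp [hA'def, Finset.mem_sdiff, hvKC]
  obtain ⟨K', hK'A', hK'ind, hK'dom⟩ := ih A' hA'ss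
  have hK'A : K' ⊆ A' := hK'A'
  have hCnotA' : ∀ x ∈ C, x ∉ A' := by
    intro x hx hxA'
    rw [hA'def, Finset.mem_sdiff, Finset.mem_union] at hxA'
    by_cases hxK : x ∈ KC
    · exact hxA'.2 (Or.inl hxK)
    · obtain ⟨u, huK, hxu⟩ := hKCdom x hx hxK
      exact hxA'.2 (Or.inr (Finset.mem_filter.2 ⟨hxA'.1, u, huK, hxu⟩))
  refine ⟨KC ∪ K', ?_, ?_, ?_⟩
  · intro x hx
    rcases Finset.mem_union.1 hx with h | h
    · exact hCA (hKC_C h)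
    · exact (Finset.sdiff_subset) (hK'A' h)
  · intro x hx y hy hxy
    rcases Finset.mem_union.1 hx with hx | hx <;> rcases Finset.mem_union.1 hy with hy | hy
    · exact hKCind x hx y hy hxy
    · -- x ∈ KC, y ∈ K' : y ∈ A and edge from C, so y ∈ C, but C ∩ A' = ∅
      have hyA : y ∈ A := Finset.sdiff_subset (hK'A' hy)
      have hyC : y ∈ C := hterm x (hKC_C hx) y hxy hyA
      exact hCnotA' y hyC (hK'A' hy)
    · -- x ∈ K', y ∈ KC : x ∈ Nbr, contradiction with x ∈ A'
      have hxA' := hK'A' hx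
      rw [hA'def, Finset.mem_sdiff, Finset.mem_union] at hxA'
      exact hxA'.2 (Or.inr (Finset.mem_filter.2 ⟨hxA'.1, y, hy, hxy⟩))
    · exact hK'ind x hx y hy hxy
  · intro w hwA hwK
    by_cases hwKC : w ∈ KC
    · exact absurd (Finset.mem_union_left _ hwKC) hwK
    by_cases hwN : w ∈ Nbr
    · obtain ⟨u, huK, hwu⟩ := (Finset.mem_filter.1 hwN).2
      exact ⟨u, Finset.mem_union_left _ huK, hwu⟩
    · have hwA' : w ∈ A' := by
        rw [hA'def, Finset.mem_sdiff, Finset.mem_union]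
        exact ⟨hwA, fun h => h.elim hwKC hwN⟩
      have hwK' : w ∉ K' := fun h => hwK (Finset.mem_union_right _ h)
      obtain ⟨u, huK, hwu⟩ := hK'dom w hwA' hwK'
      exact ⟨u, Finset.mem_union_right _ huK, hwu⟩

end Ker


section Main
variable {V : Type*} [Fintype V]

lemma choose_aux (E : V → V → Prop) [DecidableRel E] (hodd : ¬ HasOddDirectedCycle E) :
    ∀ (N : ℕ) (S : V → Finset ℕ) (f : V → ℕ), (∑ v, f v ≤ N) →
      (∀ v, f v + ∑ u ∈ Finset.univ.filter (fun u => E v u), f u ≤ (S v).card) →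
      ∃ C : V → Finset ℕ, (∀ v, C v ⊆ S v) ∧ (∀ v, (C v).card = f v) ∧
        ∀ u v, (E u v ∨ E v u) → Disjoint (C u) (C v) := by
  classical
  intro N
  induction N with
  | zero =>
    intro S f hN hinv
    have hf : ∀ v, f v = 0 := by
      intro v
      have h1 : f v ≤ ∑ w, f w := Finset.single_le_sum (fun i _ => Nat.zero_le _) (Finset.mem_univ v)
      omega
    exact ⟨fun _ => ∅, fun v => Finset.empty_subset _, fun v => by simp [hf v], by simp⟩
  | succ N ihN =>
    intro S f hN hinv
    by_cases hzero : ∀ v, f v = 0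
    · exact ⟨fun _ => ∅, fun v => Finset.empty_subset _, fun v => by simp [hzero v], by simp⟩
    push_neg at hzero
    obtain ⟨v₀, hv₀⟩ := hzero
    have hfv₀ : 0 < f v₀ := Nat.pos_of_ne_zero hv₀
    have hS₀ : 0 < (S v₀).card := by have := hinv v₀; omega
    obtain ⟨c, hc⟩ := Finset.card_pos.1 hS₀
    set T : Finset V := Finset.univ.filter (fun v => 0 < f v ∧ c ∈ S v) with hTdef
    obtain ⟨K, hKT, hKind, hKdom⟩ := exists_kernel E hodd T
    have hv₀T : v₀ ∈ T := Finset.mem_filter.2 ⟨Finset.mem_univ _, hfv₀, hc⟩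
    have hfK : ∀ v ∈ K, 0 < f v := fun v hv => (Finset.mem_filter.1 (hKT hv)).2.1
    have hcS : ∀ v ∈ T, c ∈ S v := fun v hv => (Finset.mem_filter.1 hv).2.2
    have hKne : K.Nonempty := by
      by_contra h
      rw [Finset.not_nonempty_iff_eq_empty] at h
      obtain ⟨u, hu, _⟩ := hKdom v₀ hv₀T (by simp [h])
      simp [h] at hu
    set S' : V → Finset ℕ := fun v => if v ∈ T then (S v).erase c else S v with hS'def
    set f' : V → ℕ := fun v => if v ∈ K then f v - 1 else f v with hf'def
    have hS'T : ∀ v ∈ T, S' v = (S v).erase c := by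
      intro v hv; simp only [hS'def, if_pos hv]
    have hS'nT : ∀ v ∉ T, S' v = S v := by
      intro v hv; simp only [hS'def, if_neg hv]
    have hf'K : ∀ v ∈ K, f' v = f v - 1 := by
      intro v hv; simp only [hf'def, if_pos hv]
    have hf'nK : ∀ v ∉ K, f' v = f v := by
      intro v hv; simp only [hf'def, if_neg hv]
    have hf'le : ∀ v, f' v ≤ f v := by
      intro v
      by_cases hv : v ∈ K
      · rw [hf'K v hv]; omega
      · rw [hf'nK v hv]
    have hS'sub : ∀ v, S' v ⊆ S v := by
      intro v
      by_cases hv : v ∈ T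
      · rw [hS'T v hv]; exact Finset.erase_subset _ _
      · rw [hS'nT v hv]
    have hS'card : ∀ v ∈ T, (S' v).card = (S v).card - 1 := by
      intro v hv
      rw [hS'T v hv]
      exact Finset.card_erase_of_mem (hcS v hv)
    have hsum' : ∑ v, f' v ≤ N := by
      obtain ⟨w, hw⟩ := hKne
      have hlt : ∑ v, f' v < ∑ v, f v := by
        apply Finset.sum_lt_sum (fun i _ => hf'le i)
        refine ⟨w, Finset.mem_univ _, ?_⟩
        rw [hf'K w hw]
        have := hfK w hw; omega
      omega
    have hinv' : ∀ v, f' v + ∑ u ∈ Finset.univ.filter (fun u => E v u), f' u ≤ (S' v).card := by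
      intro v
      have hsumle : ∑ u ∈ Finset.univ.filter (fun u => E v u), f' u
          ≤ ∑ u ∈ Finset.univ.filter (fun u => E v u), f u :=
        Finset.sum_le_sum (fun i _ => hf'le i)
      by_cases hvK : v ∈ K
      · have hvT : v ∈ T := hKT hvK
        have h1 := hinv v
        have h2 := hS'card v hvT
        have h3 := hf'K v hvK
        have := hfK v hvK
        omega
      by_cases hvT : v ∈ T
      · obtain ⟨u₀, hu₀K, hvu₀⟩ := hKdom v hvT hvK
        have hu₀mem : u₀ ∈ Finset.univ.filter (fun u => E v u) :=
          Finset.mem_filter.2 ⟨Finset.mem_univ _, hvu₀⟩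
        have hslt : ∑ u ∈ Finset.univ.filter (fun u => E v u), f' u
            < ∑ u ∈ Finset.univ.filter (fun u => E v u), f u := by
          apply Finset.sum_lt_sum (fun i _ => hf'le i)
          refine ⟨u₀, hu₀mem, ?_⟩
          rw [hf'K u₀ hu₀K]
          have := hfK u₀ hu₀K; omega
        have h1 := hinv v
        have h2 := hS'card v hvT
        have h3 := hf'nK v hvK
        omega
      · have h1 := hinv v
        have h2 := hS'nT v hvT
        have h3 := hf'nK v hvK
        rw [h2, h3]
        omega
    obtain ⟨C', hC'sub, hC'card, hC'dis⟩ := ihN S' f' hsum' hinv'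
    have hcnotC' : ∀ v, v ∉ K → c ∉ C' v := by
      intro v hvK hcC
      by_cases hvT : v ∈ T
      · have hsub : C' v ⊆ (S v).erase c := (hS'T v hvT) ▸ hC'sub v
        exact (Finset.mem_erase.1 (hsub hcC)).1 rfl
      · rw [hTdef, Finset.mem_filter] at hvT
        push_neg at hvT
        have hvT' := hvT (Finset.mem_univ v)
        by_cases hfv : 0 < f v
        · have hcS' : c ∉ S v := hvT' hfv
          exact hcS' ((hS'sub v) ((hC'sub v) hcC))
        · have hcard0 : (C' v).card = 0 := by
            rw [hC'card v, hf'nK v hvK]; omega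
          rw [Finset.card_eq_zero] at hcard0
          simp [hcard0] at hcC
    have hcnotC'K : ∀ v ∈ K, c ∉ C' v := by
      intro v hv hcC
      have hsub : C' v ⊆ (S v).erase c := (hS'T v (hKT hv)) ▸ hC'sub v
      exact (Finset.mem_erase.1 (hsub hcC)).1 rfl
    refine ⟨fun v => if v ∈ K then insert c (C' v) else C' v, ?_, ?_, ?_⟩
    · intro v
      by_cases hvK : v ∈ K
      · simp only [if_pos hvK]
        intro x hx
        rcases Finset.mem_insert.1 hx with rfl | hx
        · exact hcS v (hKT hvK)
        · exact (hS'sub v) ((hC'sub v) hx)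
      · simp only [if_neg hvK]
        exact fun x hx => (hS'sub v) ((hC'sub v) hx)
    · intro v
      by_cases hvK : v ∈ K
      · simp only [if_pos hvK]
        rw [Finset.card_insert_of_notMem (hcnotC'K v hvK), hC'card v, hf'K v hvK]
        have := hfK v hvK; omega
      · simp only [if_neg hvK]
        rw [hC'card v, hf'nK v hvK]
    · intro u v huv
      have hdis := hC'dis u v huv
      by_cases huK : u ∈ K <;> by_cases hvK : v ∈ K
      · exfalso
        rcases huv with h | h
        · exact hKind u huK v hvK h
        · exact hKind v hvK u huK h
      · simp only [if_pos huK, if_neg hvK]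
        rw [Finset.disjoint_insert_left]
        exact ⟨hcnotC' v hvK, hdis⟩
      · simp only [if_neg huK, if_pos hvK]
        rw [Finset.disjoint_insert_right]
        exact ⟨hcnotC' u huK, hdis⟩
      · simp only [if_neg huK, if_neg hvK]
        exact hdis

end Main


theorem choosable_of_orientation_no_odd_cycle {V : Type*} [Fintype V] (G : SimpleGraph V)
    (E : V → V → Prop)
    (horient : ∀ u v, G.Adj u v ↔ E u v ∨ E v u)
    (hanti : ∀ u v, E u v → ¬ E v u)
    (hodd : ¬ HasOddDirectedCycle E)
    (d : ℕ) (hdeg : ∀ v, Nat.card {u // E v u} ≤ d)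
    (k : ℕ) (hk : 0 < k) :
    G.Choosable (k * (d + 1)) k := by
  classical
  intro S hS
  have hinv : ∀ v, k + ∑ u ∈ Finset.univ.filter (fun u => E v u), (fun _ : V => k) u
      ≤ (S v).card := by
    intro v
    have hcard : (Finset.univ.filter (fun u => E v u)).card ≤ d := by
      have h := hdeg v
      rwa [Nat.card_eq_fintype_card, Fintype.card_subtype] at h
    rw [hS v, Finset.sum_const, smul_eq_mul]
    have h1 : (Finset.univ.filter (fun u => E v u)).card * k ≤ d * k :=
      Nat.mul_le_mul_right k hcard
    have h2 : k * (d + 1) = k + d * k := by ring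
    omega
  obtain ⟨C, h1, h2, h3⟩ := choose_aux E hodd (∑ _v : V, k) S (fun _ => k) le_rfl hinv
  exact ⟨C, h1, h2, fun u v huv => h3 u v ((horient u v).1 huv)⟩
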